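/- Let Y be a real-valued random variable and X an ℝ^p-valued random vector such that Y is conditionally independent of X given B^⊤X, where B ∈ ℝ^{p×d}. Suppose B = Θ Γ for matrices Θ ∈ ℝ^{p×q} and Γ ∈ ℝ^{q×d}. Then Y is conditionally independent of Θ^⊤X given Γ^⊤(Θ^⊤X). -/
import Mathlib


open MeasureTheory ProbabilityTheory Matrix

/-- **Envelope-subspace reduction for sufficient dimension reduction.** If `Y ⊥ X | Bᵀ X`
and `B = Θ Γ`, then `Y ⊥ Θᵀ X | Γᵀ (Θᵀ X)`: the dimension-reduction condition transfers to
the reduced covariates `Θᵀ X`. -/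
theorem envelope_reduction_condIndep
    {Ω : Type*} [mΩ : MeasurableSpace Ω] [StandardBorelSpace Ω] [Nonempty Ω]
    (μ : Measure Ω) [IsProbabilityMeasure μ]
    {p d q : ℕ}
    (Y : Ω → ℝ) (X : Ω → (Fin p → ℝ)) (hYm : Measurable Y) (hXm : Measurable X)
    (B : Matrix (Fin p) (Fin d) ℝ) (Θ : Matrix (Fin p) (Fin q) ℝ)
    (Γ : Matrix (Fin q) (Fin d) ℝ) (hB : B = Θ * Γ)
    (hm : MeasurableSpace.comap (fun ω => Bᵀ.mulVec (X ω)) inferInstance ≤ mΩ)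
    (hm' : MeasurableSpace.comap (fun ω => Γᵀ.mulVec (Θᵀ.mulVec (X ω))) inferInstance ≤ mΩ)
    -- hypothesis: Y ⊥ X | Bᵀ X
    (hCI : CondIndepFun (MeasurableSpace.comap (fun ω => Bᵀ.mulVec (X ω)) inferInstance)
      hm Y X μ) :
    -- conclusion: Y ⊥ Θᵀ X | Γᵀ (Θᵀ X)
    CondIndepFun
      (MeasurableSpace.comap (fun ω => Γᵀ.mulVec (Θᵀ.mulVec (X ω))) inferInstance)
      hm' Y (fun ω => Θᵀ.mulVec (X ω)) μ := by
  have hfun : (fun ω => Bᵀ.mulVec (X ω)) = fun ω => Γᵀ.mulVec (Θᵀ.mulVec (X ω)) := by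
    funext ω
    simp [hB, Matrix.transpose_mul, Matrix.mulVec_mulVec]
  subst hB
  revert hm hCI
  rw [hfun]
  intro hm hCI
  exact hCI.comp measurable_id (Θᵀ.mulVecLin.continuous_of_finiteDimensional.measurable)
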